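/- Let μ, r ∈ ℝ, σ > 0 and T > 0. For u > 0, x ∈ (0,1), z ∈ ℝ, set A(u,z) := exp((μ − r − σ²/2)·u + σ·√u·z) and Y(u,x,z) := x·A(u,z)/(x·A(u,z) + 1 − x), and let γ denote the standard Gaussian measure on ℝ (mean 0, variance 1). Then there exists a constant C such that for all u ∈ (0,T] and all x ∈ (0,1), ∫_ℝ |Y(u,x,z) − x| dγ(z) ≤ C·√u. -/
import Mathlib


open Set MeasureTheory ProbabilityTheory

/-- The stochastic exponential factor `A(u,z) = exp((μ-r-σ²/2)u + σ√u z)`. -/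
noncomputable def stochExp (μ r σ u z : ℝ) : ℝ :=
  Real.exp ((μ - r - σ^2 / 2) * u + σ * Real.sqrt u * z)

/-- The uncontrolled wealth fraction `Y(u,x,z) = x A / (x A + 1 - x)`. -/
noncomputable def wealthFrac (μ r σ u x z : ℝ) : ℝ :=
  x * stochExp μ r σ u z / (x * stochExp μ r σ u z + 1 - x)

lemma integrable_exp_mul_gaussian (t : ℝ) :
    Integrable (fun z => Real.exp (t * z)) (gaussianReal 0 1) := by
  rw [gaussianReal_of_var_ne_zero _ one_ne_zero]
  rw [integrable_withDensity_iff (measurable_gaussianPDF 0 1)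
    (Filter.Eventually.of_forall fun x => ENNReal.ofReal_lt_top)]
  have hc : Real.sqrt (2 * Real.pi * ((1:NNReal):ℝ)) = Real.sqrt (2 * Real.pi) := by norm_num
  have e1 : ∀ w : ℝ, Real.exp (t^2/2) * Real.exp (-(1/2) * (w - t)^2)
      = Real.exp (t * w) * Real.exp (-(w - 0)^2 / (2 * ((1:NNReal):ℝ))) := by
    intro w
    rw [← Real.exp_add, ← Real.exp_add]
    push_cast
    ring_nf
  have heq : (fun z => Real.exp (t * z) * (gaussianPDF 0 1 z).toReal)
      = fun z => ((Real.sqrt (2 * Real.pi))⁻¹ * Real.exp (t^2/2)) *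
        Real.exp (-(1/2) * (z - t)^2) := by
    ext z
    rw [gaussianPDF, ENNReal.toReal_ofReal (gaussianPDFReal_nonneg _ _ _), gaussianPDFReal, hc,
      mul_assoc, e1 z]
    ring
  rw [heq]
  exact ((integrable_exp_neg_mul_sq (by norm_num : (0:ℝ) < 1/2)).comp_sub_right t).const_mul _

lemma integrable_exp_abs_gaussian (t : ℝ) :
    Integrable (fun z => Real.exp (t * |z|)) (gaussianReal 0 1) := by
  refine (((integrable_exp_mul_gaussian t).add (integrable_exp_mul_gaussian (-t))).mono'
    ?_ (Filter.Eventually.of_forall fun z => ?_))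
  · exact (Real.continuous_exp.comp (continuous_const.mul continuous_abs)).aestronglyMeasurable
  · rw [Real.norm_eq_abs, abs_of_pos (Real.exp_pos _)]
    simp only [Pi.add_apply]
    rcases abs_cases z with ⟨h, _⟩ | ⟨h, _⟩
    · rw [h]; nlinarith [Real.exp_pos (-t * z)]
    · rw [h, mul_neg, ← neg_mul]; nlinarith [Real.exp_pos (t * z)]

lemma integrable_h_gaussian (b c d : ℝ) (hb : 0 ≤ b) (hc : 0 ≤ c) :
    Integrable (fun z => (b + c * |z|) * Real.exp (d + |d| * |z|)) (gaussianReal 0 1) := by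
  refine (((integrable_exp_abs_gaussian (|d| + 1)).const_mul ((b + c) * Real.exp d)).mono'
    ?_ (Filter.Eventually.of_forall fun z => ?_))
  · refine Continuous.aestronglyMeasurable ?_
    exact (continuous_const.add (continuous_const.mul continuous_abs)).mul
      (Real.continuous_exp.comp (continuous_const.add (continuous_const.mul continuous_abs)))
  · rw [Real.norm_eq_abs, abs_of_nonneg (by positivity)]
    have h1 : (1:ℝ) ≤ Real.exp |z| := by
      rw [← Real.exp_zero]; exact Real.exp_le_exp.mpr (abs_nonneg z)
    have h2 : |z| ≤ Real.exp |z| := le_trans (by linarith) (Real.add_one_le_exp _)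
    have h3 : b + c * |z| ≤ (b + c) * Real.exp |z| := by nlinarith
    calc (b + c * |z|) * Real.exp (d + |d| * |z|)
        ≤ ((b + c) * Real.exp |z|) * Real.exp (d + |d| * |z|) := by
          apply mul_le_mul_of_nonneg_right h3 (le_of_lt (Real.exp_pos _))
      _ = (b + c) * Real.exp d * Real.exp ((|d| + 1) * |z|) := by
          rw [mul_assoc, mul_assoc, ← Real.exp_add, ← Real.exp_add]
          congr 1
          ring

lemma abs_exp_sub_one_le' (y : ℝ) : |Real.exp y - 1| ≤ |y| * Real.exp |y| := by
  rcases le_or_gt 0 y with h | h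
  · rw [abs_of_nonneg h, abs_of_nonneg (by nlinarith [Real.add_one_le_exp y] : (0:ℝ) ≤ Real.exp y - 1)]
    have h1 := Real.add_one_le_exp (-y)
    rw [Real.exp_neg] at h1
    have hp := Real.exp_pos y
    have key : (-y + 1) * Real.exp y ≤ 1 := by
      have := mul_le_mul_of_nonneg_right h1 hp.le
      rwa [inv_mul_cancel₀ hp.ne'] at this
    nlinarith
  · have hlt : Real.exp y < 1 := by
      rw [← Real.exp_zero]; exact Real.exp_lt_exp.mpr h
    rw [abs_of_neg h, abs_of_nonpos (by linarith : Real.exp y - 1 ≤ 0)]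
    have h1 := Real.add_one_le_exp y
    have h2 : (1:ℝ) ≤ Real.exp (-y) := by
      rw [← Real.exp_zero]; exact Real.exp_le_exp.mpr (by linarith)
    nlinarith

/-- Lemma 5.5 (v), bound part: `E[|Y_s^{(t,x)} - x|] ≤ C √(s-t)` uniformly in
`u = s - t ∈ (0,T]` and `x ∈ (0,1)`. -/
theorem wealthFrac_increment_sqrt_bound (μ r σ T : ℝ) (hσ : 0 < σ) (hT : 0 < T) :
    ∃ C : ℝ, ∀ u ∈ Ioc (0:ℝ) T, ∀ x ∈ Ioo (0:ℝ) 1,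
      (∫ z, |wealthFrac μ r σ u x z - x| ∂(gaussianReal 0 1)) ≤ C * Real.sqrt u := by
  set a : ℝ := μ - r - σ^2 / 2 with ha
  set d : ℝ := |a| * T + σ * Real.sqrt T with hd
  have hd0 : 0 ≤ d := by positivity
  have hdd : |d| = d := abs_of_nonneg hd0
  set h : ℝ → ℝ := fun z => (|a| * Real.sqrt T + σ * |z|) * Real.exp (d + d * |z|) with hh
  have hint : Integrable h (gaussianReal 0 1) := by
    have := integrable_h_gaussian (|a| * Real.sqrt T) σ d (by positivity) hσ.le
    rw [hdd] at this
    exact this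
  refine ⟨∫ z, h z ∂(gaussianReal 0 1), fun u hu x hx => ?_⟩
  obtain ⟨hu0, huT⟩ := hu
  obtain ⟨hx0, hx1⟩ := hx
  have hsu : 0 < Real.sqrt u := Real.sqrt_pos.mpr hu0
  have hsuT : Real.sqrt u ≤ Real.sqrt T := Real.sqrt_le_sqrt huT
  -- pointwise bound
  have key : ∀ z : ℝ, |wealthFrac μ r σ u x z - x| ≤ Real.sqrt u * h z := by
    intro z
    set A : ℝ := stochExp μ r σ u z with hA
    have hApos : 0 < A := Real.exp_pos _
    have hD : 0 < x * A + 1 - x := by nlinarith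
    -- step 1 : |Y - x| ≤ |A - 1|
    have step1 : |wealthFrac μ r σ u x z - x| ≤ |A - 1| := by
      have heq : wealthFrac μ r σ u x z - x = x * (1 - x) * (A - 1) / (x * A + 1 - x) := by
        rw [wealthFrac, ← hA]
        field_simp
        ring
      rw [heq, abs_div, abs_of_pos hD, abs_mul, abs_mul,
        abs_of_pos hx0, abs_of_pos (by linarith : (0:ℝ) < 1 - x)]
      rw [div_le_iff₀ hD]
      have h1 : x * (1 - x) * |A - 1| ≤ (1 - x) * |A - 1| := by
        nlinarith [mul_nonneg (mul_nonneg (by linarith : (0:ℝ) ≤ 1 - x)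
          (by linarith : (0:ℝ) ≤ 1 - x)) (abs_nonneg (A - 1))]
      have h2 : (1 - x) * |A - 1| ≤ (x * A + 1 - x) * |A - 1| := by
        nlinarith [mul_nonneg (mul_nonneg hx0.le hApos.le) (abs_nonneg (A - 1))]
      linarith
    -- step 2 : |A - 1| ≤ |y| exp |y|
    set y : ℝ := a * u + σ * Real.sqrt u * z with hy
    have step2 : |A - 1| ≤ |y| * Real.exp |y| := abs_exp_sub_one_le' y
    -- step 3 : |y| bounds
    have habs : |y| ≤ |a| * u + σ * Real.sqrt u * |z| := by
      calc |y| ≤ |a * u| + |σ * Real.sqrt u * z| := abs_add_le _ _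
        _ = |a| * u + σ * Real.sqrt u * |z| := by
          rw [abs_mul, abs_mul, abs_mul, abs_of_pos hu0, abs_of_pos hσ, abs_of_pos hsu]
    have hu_eq : u = Real.sqrt u * Real.sqrt u := (Real.mul_self_sqrt hu0.le).symm
    have h3 : |y| ≤ Real.sqrt u * (|a| * Real.sqrt T + σ * |z|) := by
      calc |y| ≤ |a| * u + σ * Real.sqrt u * |z| := habs
        _ = Real.sqrt u * (|a| * Real.sqrt u + σ * |z|) := by
            linear_combination |a| * (Real.mul_self_sqrt hu0.le).symm
        _ ≤ Real.sqrt u * (|a| * Real.sqrt T + σ * |z|) := by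
            apply mul_le_mul_of_nonneg_left _ hsu.le
            have : |a| * Real.sqrt u ≤ |a| * Real.sqrt T :=
              mul_le_mul_of_nonneg_left hsuT (abs_nonneg a)
            linarith
    have h4 : |y| ≤ d + d * |z| := by
      have hb1 : |a| * u ≤ |a| * T := mul_le_mul_of_nonneg_left huT (abs_nonneg a)
      have hb2 : σ * Real.sqrt u * |z| ≤ σ * Real.sqrt T * |z| := by
        apply mul_le_mul_of_nonneg_right _ (abs_nonneg z)
        exact mul_le_mul_of_nonneg_left hsuT hσ.le
      have hb3 : σ * Real.sqrt T * |z| ≤ d * |z| := by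
        apply mul_le_mul_of_nonneg_right _ (abs_nonneg z)
        rw [hd]; nlinarith [abs_nonneg a]
      calc |y| ≤ |a| * u + σ * Real.sqrt u * |z| := habs
        _ ≤ |a| * T + σ * Real.sqrt T * |z| := by linarith
        _ ≤ d + d * |z| := by rw [hd]; nlinarith [abs_nonneg z, Real.sqrt_nonneg T]
    calc |wealthFrac μ r σ u x z - x| ≤ |y| * Real.exp |y| := le_trans step1 step2
      _ ≤ (Real.sqrt u * (|a| * Real.sqrt T + σ * |z|)) * Real.exp (d + d * |z|) := by
          apply mul_le_mul h3 (Real.exp_le_exp.mpr h4) (le_of_lt (Real.exp_pos _))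
          positivity
      _ = Real.sqrt u * h z := by rw [hh]; ring
  calc (∫ z, |wealthFrac μ r σ u x z - x| ∂(gaussianReal 0 1))
      ≤ ∫ z, Real.sqrt u * h z ∂(gaussianReal 0 1) := by
        apply integral_mono_of_nonneg (Filter.Eventually.of_forall fun z => abs_nonneg _)
          (hint.const_mul _) (Filter.Eventually.of_forall key)
    _ = (∫ z, h z ∂(gaussianReal 0 1)) * Real.sqrt u := by
        rw [integral_const_mul]; ring
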